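/- Let L be a field of characteristic 0 and let A, B ∈ GL_2(L) satisfy det(A)·det(B) = 1. Let A ⊗ B ∈ GL_4(L) denote the Kronecker (tensor) product of A and B, acting on L⁴ ≅ L² ⊗ L². Then the rank of the matrix A ⊗ B − I_4 is not equal to 3; equivalently, the quotient L⁴ / (A⊗B − 1)L⁴ is not 1-dimensional over L. -/

import Mathlib

open Kronecker

open Matrix in
private theorem det_fin_four' {R : Type*} [CommRing R] (M : Matrix (Fin 4) (Fin 4) R) :
    M.det = M 0 0*M 1 1*M 2 2*M 3 3 - M 0 0*M 1 1*M 2 3*M 3 2 - M 0 0*M 1 2*M 2 1*M 3 3 + M 0 0*M 1 2*M 2 3*M 3 1 + M 0 0*M 1 3*M 2 1*M 3 2 - M 0 0*M 1 3*M 2 2*M 3 1 - M 0 1*M 1 0*M 2 2*M 3 3 + M 0 1*M 1 0*M 2 3*M 3 2 + M 0 1*M 1 2*M 2 0*M 3 3 - M 0 1*M 1 2*M 2 3*M 3 0 - M 0 1*M 1 3*M 2 0*M 3 2 + M 0 1*M 1 3*M 2 2*M 3 0 + M 0 2*M 1 0*M 2 1*M 3 3 - M 0 2*M 1 0*M 2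 3*M 3 1 - M 0 2*M 1 1*M 2 0*M 3 3 + M 0 2*M 1 1*M 2 3*M 3 0 + M 0 2*M 1 3*M 2 0*M 3 1 - M 0 2*M 1 3*M 2 1*M 3 0 - M 0 3*M 1 0*M 2 1*M 3 2 + M 0 3*M 1 0*M 2 2*M 3 1 + M 0 3*M 1 1*M 2 0*M 3 2 - M 0 3*M 1 1*M 2 2*M 3 0 - M 0 3*M 1 2*M 2 0*M 3 1 + M 0 3*M 1 2*M 2 1*M 3 0 := by
  have h2 : (Fin.succ 2 : Fin 4) = 3 := rfl
  simp [Matrix.det_succ_row_zero, Fin.sum_univ_succ, h2, Fin.succAbove]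
  ring

private def e4 : Fin 4 ≃ Fin 2 × Fin 2 where
  toFun := ![(0,0),(0,1),(1,0),(1,1)]
  invFun := fun p => ![![0,1],![2,3]] p.1 p.2
  left_inv := by decide
  right_inv := by decide

open Matrix in
private theorem keydet {L : Type} [Field L] (A B : Matrix (Fin 2) (Fin 2) L) :
    (A ⊗ₖ B - 1).det = A 0 0^2 * A 1 1^2 * B 0 0^2 * B 1 1^2 - 2 * A 0 0^2 * A 1 1^2 * B 0 0 * B 0 1 * B 1 0 * B 1 1 + A 0 0^2 * A 1 1^2 * B 0 1^2 * B 1 0^2 - 2 * A 0 0 * A 0 1 * A 1 0 * A 1 1 * B 0 0^2 * B 1 1^2 + 4 * A 0 0 * A 0 1 * A 1 0 * A 1 1 * B 0 0 * B 0 1 * B 1 0 * B 1 1 - 2 * A 0 0 * A 0 1 * A 1 0 * A 1 1 * B 0 1^2 * B 1 0^2 + A 0 1^2 * A 1 0^2 * B 0 0^2 * B 1 1^2 - 2 * A 0 1^2 * A 1 0^2 * B 0 0 * B 0 1 * B 1 0 * B 1 1 + A 0 1^2 * A 1 0^2 * B 0 1^2 * B 1 0^2 - A 0 0^2 * A 1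 1 * B 0 0^2 * B 1 1 + A 0 0^2 * A 1 1 * B 0 0 * B 0 1 * B 1 0 - A 0 0^2 * A 1 1 * B 0 0 * B 1 1^2 + A 0 0^2 * A 1 1 * B 0 1 * B 1 0 * B 1 1 + A 0 0 * A 0 1 * A 1 0 * B 0 0^2 * B 1 1 - A 0 0 * A 0 1 * A 1 0 * B 0 0 * B 0 1 * B 1 0 + A 0 0 * A 0 1 * A 1 0 * B 0 0 * B 1 1^2 - A 0 0 * A 0 1 * A 1 0 * B 0 1 * B 1 0 * B 1 1 - A 0 0 * A 1 1^2 * B 0 0^2 * B 1 1 + A 0 0 * A 1 1^2 * B 0 0 * B 0 1 * B 1 0 - A 0 0 * A 1 1^2 * B 0 0 * B 1 1^2 + A 0 0 * A 1 1^2 * B 0 1 * B 1 0 * B 1 1 + A 0 1 * A 1 0 * A 1 1 * B 0 0^2 * B 1 1 - A 0 1 * A 1 0 * A 1 1 * B 0 0 * B 0 1 * B 1 0 + A 0 1 * A 1 0 * A 1 1 * B 0 0 * B 1 1^2 - A 0 1 * A 1 0 * A 1 1 * B 0 1 * B 1 0 * B 1 1 + A 0 0^2 * B 0 0 * B 1 1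 - A 0 0^2 * B 0 1 * B 1 0 + A 0 0 * A 1 1 * B 0 0^2 + 2 * A 0 0 * A 1 1 * B 0 0 * B 1 1 + A 0 0 * A 1 1 * B 1 1^2 - A 0 1 * A 1 0 * B 0 0^2 - 2 * A 0 1 * A 1 0 * B 0 1 * B 1 0 - A 0 1 * A 1 0 * B 1 1^2 + A 1 1^2 * B 0 0 * B 1 1 - A 1 1^2 * B 0 1 * B 1 0 - A 0 0 * B 0 0 - A 0 0 * B 1 1 - A 1 1 * B 0 0 - A 1 1 * B 1 1 + 1 := by
  rw [← Matrix.det_submatrix_equiv_self e4 (A ⊗ₖ B - 1), det_fin_four']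
  simp only [e4, Matrix.submatrix_apply, Equiv.coe_fn_mk, Matrix.sub_apply,
    Matrix.kroneckerMap_apply, Matrix.one_apply, Matrix.cons_val_zero, Matrix.cons_val_one,
    Matrix.head_cons, Matrix.cons_val_two, Matrix.tail_cons, Matrix.cons_val_three]
  norm_num [Prod.ext_iff]
  ring

open Matrix in
private theorem rank_le_two_of_kernel {L : Type} [Field L]
    (N : Matrix (Fin 2 × Fin 2) (Fin 2 × Fin 2) L) (v w : Fin 2 × Fin 2 → L)
    (hv : N.mulVec v = 0) (hw : N.mulVec w = 0) (p q : Fin 2 × Fin 2)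
    (hvq : v q = 0) (hwp : w p = 0) (hvp : v p ≠ 0) (hwq : w q ≠ 0) :
    N.rank ≤ 2 := by
  have hli : LinearIndependent L ![v, w] := by
    rw [LinearIndependent.pair_iff]
    intro s t hst
    have hp := congrFun hst p
    have hq := congrFun hst q
    simp only [Pi.add_apply, Pi.smul_apply, smul_eq_mul, Pi.zero_apply, hvq, hwp,
      mul_zero, add_zero, zero_add] at hp hq
    exact ⟨by rcases mul_eq_zero.mp hp with h' | h'; exact h'; exact absurd h' hvp,
      by rcases mul_eq_zero.mp hq with h' | h'; exact h'; exact absurd h' hwq⟩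
  have hm : ∀ i : Fin 2, ![v, w] i ∈ LinearMap.ker N.mulVecLin := by
    intro i
    fin_cases i <;>
      simp only [LinearMap.mem_ker, Matrix.mulVecLin_apply, Fin.mk_zero, Fin.mk_one,
        Fin.isValue, Matrix.cons_val_zero, Matrix.cons_val_one, Matrix.head_cons]
    · exact hv
    · exact hw
  have hli' : LinearIndependent L (fun i : Fin 2 => (⟨![v, w] i, hm i⟩ :
      LinearMap.ker N.mulVecLin)) := by
    apply LinearIndependent.of_comp (LinearMap.ker N.mulVecLin).subtype
    have : ((LinearMap.ker N.mulVecLin).subtype ∘ fun i : Fin 2 => (⟨![v, w] i, hm i⟩ :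
        LinearMap.ker N.mulVecLin)) = ![v, w] := by
      funext i; rfl
    rw [this]; exact hli
  have h2 : 2 ≤ Module.finrank L (LinearMap.ker N.mulVecLin) := by
    simpa using hli'.fintype_card_le_finrank
  have h4 := LinearMap.finrank_range_add_finrank_ker N.mulVecLin
  have hdom : Module.finrank L (Fin 2 × Fin 2 → L) = 4 := by
    simp [Module.finrank_pi]
  rw [hdom] at h4
  rw [Matrix.rank]
  omega

open Matrix in
private theorem coreB {L : Type} [Field L] (A B : Matrix (Fin 2) (Fin 2) L)
    (hd : (A 0 0 * A 1 1 - A 0 1 * A 1 0) * (B 0 0 * B 1 1 - B 0 1 * B 1 0) = 1)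
    (hb : (B 0 0 * B 1 1 - B 0 1 * B 1 0) * (A 0 0 + A 1 1) = B 0 0 + B 1 1)
    (hB : B 1 0 ≠ 0 ∨ B 0 1 ≠ 0) :
    (A ⊗ₖ B - 1).rank ≤ 2 := by
  rcases hB with hB | hB
  · refine rank_le_two_of_kernel _
      (fun r => !![B 0 0 - (B 0 0 * B 1 1 - B 0 1 * B 1 0) * A 0 0, B 1 0;
                   -((B 0 0 * B 1 1 - B 0 1 * B 1 0) * A 1 0), 0] r.1 r.2)
      (fun r => !![-((B 0 0 * B 1 1 - B 0 1 * B 1 0) * A 0 1), 0;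
                   B 0 0 - (B 0 0 * B 1 1 - B 0 1 * B 1 0) * A 1 1, B 1 0] r.1 r.2)
      ?_ ?_ (0,1) (1,1) (by norm_num) (by norm_num) (by simpa using hB) (by simpa using hB)
    · funext r
      obtain ⟨i, j⟩ := r
      fin_cases i <;> fin_cases j <;>
        simp only [Matrix.mulVec, dotProduct, Fintype.sum_prod_type, Fin.sum_univ_two,
          Matrix.sub_apply, Matrix.kroneckerMap_apply, Matrix.one_apply, Pi.zero_apply,
          Matrix.cons_val_zero, Matrix.cons_val_one, Matrix.head_cons, Prod.mk.injEq] <;>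
        norm_num [Prod.ext_iff]
      · linear_combination B 0 0 * hd - A 0 0 * B 0 0 * hb
      · linear_combination B 1 0 * hd - A 0 0 * B 1 0 * hb
      · linear_combination - A 1 0 * B 0 0 * hb
      · linear_combination - A 1 0 * B 1 0 * hb
    · funext r
      obtain ⟨i, j⟩ := r
      fin_cases i <;> fin_cases j <;>
        simp only [Matrix.mulVec, dotProduct, Fintype.sum_prod_type, Fin.sum_univ_two,
          Matrix.sub_apply, Matrix.kroneckerMap_apply, Matrix.one_apply, Pi.zero_apply,
          Matrix.cons_val_zero, Matrix.cons_val_one, Matrix.head_cons, Prod.mk.injEq] <;>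
        norm_num [Prod.ext_iff]
      · linear_combination - A 0 1 * B 0 0 * hb
      · linear_combination - A 0 1 * B 1 0 * hb
      · linear_combination B 0 0 * hd - A 1 1 * B 0 0 * hb
      · linear_combination B 1 0 * hd - A 1 1 * B 1 0 * hb
  · refine rank_le_two_of_kernel _
      (fun r => !![B 0 1, B 1 1 - (B 0 0 * B 1 1 - B 0 1 * B 1 0) * A 0 0;
                   0, -((B 0 0 * B 1 1 - B 0 1 * B 1 0) * A 1 0)] r.1 r.2)
      (fun r => !![0, -((B 0 0 * B 1 1 - B 0 1 * B 1 0) * A 0 1);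
                   B 0 1, B 1 1 - (B 0 0 * B 1 1 - B 0 1 * B 1 0) * A 1 1] r.1 r.2)
      ?_ ?_ (0,0) (1,0) (by norm_num) (by norm_num) (by simpa using hB) (by simpa using hB)
    · funext r
      obtain ⟨i, j⟩ := r
      fin_cases i <;> fin_cases j <;>
        simp only [Matrix.mulVec, dotProduct, Fintype.sum_prod_type, Fin.sum_univ_two,
          Matrix.sub_apply, Matrix.kroneckerMap_apply, Matrix.one_apply, Pi.zero_apply,
          Matrix.cons_val_zero, Matrix.cons_val_one, Matrix.head_cons, Prod.mk.injEq] <;>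
        norm_num [Prod.ext_iff]
      · linear_combination B 0 1 * hd - A 0 0 * B 0 1 * hb
      · linear_combination B 1 1 * hd - A 0 0 * B 1 1 * hb
      · linear_combination - A 1 0 * B 0 1 * hb
      · linear_combination - A 1 0 * B 1 1 * hb
    · funext r
      obtain ⟨i, j⟩ := r
      fin_cases i <;> fin_cases j <;>
        simp only [Matrix.mulVec, dotProduct, Fintype.sum_prod_type, Fin.sum_univ_two,
          Matrix.sub_apply, Matrix.kroneckerMap_apply, Matrix.one_apply, Pi.zero_apply,
          Matrix.cons_val_zero, Matrix.cons_val_one, Matrix.head_cons, Prod.mk.injEq] <;>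
        norm_num [Prod.ext_iff]
      · linear_combination - A 0 1 * B 0 1 * hb
      · linear_combination - A 0 1 * B 1 1 * hb
      · linear_combination B 0 1 * hd - A 1 1 * B 0 1 * hb
      · linear_combination B 1 1 * hd - A 1 1 * B 1 1 * hb

open Matrix in
private theorem rank_swap {L : Type} [Field L] (A B : Matrix (Fin 2) (Fin 2) L) :
    (B ⊗ₖ A - 1).rank = (A ⊗ₖ B - 1).rank := by
  have hre : (B ⊗ₖ A - 1 : Matrix (Fin 2 × Fin 2) (Fin 2 × Fin 2) L) =
      Matrix.reindex (Equiv.prodComm (Fin 2) (Fin 2)) (Equiv.prodComm (Fin 2) (Fin 2))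
        (A ⊗ₖ B - 1) := by
    ext ⟨i, j⟩ ⟨k, l⟩
    by_cases h1 : i = k <;> by_cases h2 : j = l <;>
      simp [Matrix.one_apply, Prod.ext_iff, h1, h2, mul_comm]
  rw [hre, Matrix.rank_reindex]

open Matrix in
private theorem coreDiag {L : Type} [Field L] (A B : Matrix (Fin 2) (Fin 2) L)
    (hd : (A 0 0 * A 1 1 - A 0 1 * A 1 0) * (B 0 0 * B 1 1 - B 0 1 * B 1 0) = 1)
    (hdet0 : (A ⊗ₖ B - 1).det = 0)
    (hA10 : A 1 0 = 0) (hA01 : A 0 1 = 0) (hB10 : B 1 0 = 0) (hB01 : B 0 1 = 0) :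
    (A ⊗ₖ B - 1).rank ≤ 2 := by
  have hk := keydet A B
  rw [hdet0] at hk
  rw [hA10, hA01, hB10, hB01] at hk hd
  have hd' : A 0 0 * A 1 1 * (B 0 0 * B 1 1) = 1 := by linear_combination hd
  have hp : (A 0 0 * B 0 0 - 1) * ((A 0 0 * B 1 1 - 1) * ((A 1 1 * B 0 0 - 1) *
      (A 1 1 * B 1 1 - 1))) = 0 := by linear_combination - hk
  have main00 : A 0 0 * B 0 0 = 1 → A 1 1 * B 1 1 = 1 → (A ⊗ₖ B - 1).rank ≤ 2 := by
    intro hx hx'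
    refine rank_le_two_of_kernel _
      (fun r => if r = ((0 : Fin 2), (0 : Fin 2)) then 1 else 0)
      (fun r => if r = ((1 : Fin 2), (1 : Fin 2)) then 1 else 0)
      ?_ ?_ ((0 : Fin 2), (0 : Fin 2)) ((1 : Fin 2), (1 : Fin 2))
      (by norm_num [Prod.ext_iff]) (by norm_num [Prod.ext_iff])
      (by norm_num) (by norm_num)
    · funext r
      obtain ⟨i, j⟩ := r
      fin_cases i <;> fin_cases j <;>
        simp only [Matrix.mulVec, dotProduct, Fintype.sum_prod_type, Fin.sum_univ_two,
          Matrix.sub_apply, Matrix.kroneckerMap_apply, Matrix.one_apply, Pi.zero_apply] <;>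
        norm_num [Prod.ext_iff, hA10, hA01, hB10, hB01] <;>
        linear_combination hx
    · funext r
      obtain ⟨i, j⟩ := r
      fin_cases i <;> fin_cases j <;>
        simp only [Matrix.mulVec, dotProduct, Fintype.sum_prod_type, Fin.sum_univ_two,
          Matrix.sub_apply, Matrix.kroneckerMap_apply, Matrix.one_apply, Pi.zero_apply] <;>
        norm_num [Prod.ext_iff, hA10, hA01, hB10, hB01] <;>
        linear_combination hx'
  have main01 : A 0 0 * B 1 1 = 1 → A 1 1 * B 0 0 = 1 → (A ⊗ₖ B - 1).rank ≤ 2 := by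
    intro hx hx'
    refine rank_le_two_of_kernel _
      (fun r => if r = ((0 : Fin 2), (1 : Fin 2)) then 1 else 0)
      (fun r => if r = ((1 : Fin 2), (0 : Fin 2)) then 1 else 0)
      ?_ ?_ ((0 : Fin 2), (1 : Fin 2)) ((1 : Fin 2), (0 : Fin 2))
      (by norm_num [Prod.ext_iff]) (by norm_num [Prod.ext_iff])
      (by norm_num) (by norm_num)
    · funext r
      obtain ⟨i, j⟩ := r
      fin_cases i <;> fin_cases j <;>
        simp only [Matrix.mulVec, dotProduct, Fintype.sum_prod_type, Fin.sum_univ_two,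
          Matrix.sub_apply, Matrix.kroneckerMap_apply, Matrix.one_apply, Pi.zero_apply] <;>
        norm_num [Prod.ext_iff, hA10, hA01, hB10, hB01] <;>
        linear_combination hx
    · funext r
      obtain ⟨i, j⟩ := r
      fin_cases i <;> fin_cases j <;>
        simp only [Matrix.mulVec, dotProduct, Fintype.sum_prod_type, Fin.sum_univ_two,
          Matrix.sub_apply, Matrix.kroneckerMap_apply, Matrix.one_apply, Pi.zero_apply] <;>
        norm_num [Prod.ext_iff, hA10, hA01, hB10, hB01] <;>
        linear_combination hx'
  rcases mul_eq_zero.mp hp with h1 | hp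
  · have hx : A 0 0 * B 0 0 = 1 := by linear_combination h1
    have hx' : A 1 1 * B 1 1 = 1 := by linear_combination hd' - A 1 1 * B 1 1 * hx
    exact main00 hx hx'
  rcases mul_eq_zero.mp hp with h1 | hp
  · have hx : A 0 0 * B 1 1 = 1 := by linear_combination h1
    have hx' : A 1 1 * B 0 0 = 1 := by linear_combination hd' - A 1 1 * B 0 0 * hx
    exact main01 hx hx'
  rcases mul_eq_zero.mp hp with h1 | h1
  · have hx : A 1 1 * B 0 0 = 1 := by linear_combination h1
    have hx' : A 0 0 * B 1 1 = 1 := by linear_combination hd' - A 0 0 * B 1 1 * hx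
    exact main01 hx' hx
  · have hx : A 1 1 * B 1 1 = 1 := by linear_combination h1
    have hx' : A 0 0 * B 0 0 = 1 := by linear_combination hd' - A 0 0 * B 0 0 * hx
    exact main00 hx' hx

/-- Let `L` be a field of characteristic `0` and `A, B ∈ GL₂(L)` with
`det A · det B = 1`. Then the Kronecker product `A ⊗ B ∈ GL₄(L)` satisfies
`rank (A ⊗ B - 1) ≠ 3`; equivalently `L⁴/(A⊗B - 1)L⁴` is not `1`-dimensional. -/
theorem stmt16 (L : Type) [Field L] [CharZero L] (A B : GL (Fin 2) L)
    (h : (A : Matrix (Fin 2) (Fin 2) L).det * (B : Matrix (Fin 2) (Fin 2) L).det = 1) :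
    ((A : Matrix (Fin 2) (Fin 2) L) ⊗ₖ (B : Matrix (Fin 2) (Fin 2) L) - 1).rank ≠ 3 := by
  set Am := (A : Matrix (Fin 2) (Fin 2) L) with hAm
  set Bm := (B : Matrix (Fin 2) (Fin 2) L) with hBm
  intro hr3
  by_cases hu : IsUnit (Am ⊗ₖ Bm - 1).det
  · have := Matrix.rank_of_isUnit _ ((Matrix.isUnit_iff_isUnit_det _).mpr hu)
    rw [hr3] at this
    simp at this
  -- determinant vanishes
  have hdet0 : (Am ⊗ₖ Bm - 1).det = 0 := by
    by_contra h0
    exact hu (isUnit_iff_ne_zero.mpr h0)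
  have hd : (Am 0 0 * Am 1 1 - Am 0 1 * Am 1 0) * (Bm 0 0 * Bm 1 1 - Bm 0 1 * Bm 1 0) = 1 := by
    rw [Matrix.det_fin_two, Matrix.det_fin_two] at h
    exact h
  have hdA : Am 0 0 * Am 1 1 - Am 0 1 * Am 1 0 ≠ 0 := by
    intro h0
    rw [h0, zero_mul] at hd
    exact zero_ne_one hd
  -- trace relation
  have hk := keydet Am Bm
  rw [hdet0] at hk
  have hq : ((Bm 0 0 * Bm 1 1 - Bm 0 1 * Bm 1 0) * (Am 0 0 + Am 1 1) - (Bm 0 0 + Bm 1 1)) ^ 2 *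
      (Am 0 0 * Am 1 1 - Am 0 1 * Am 1 0) = 0 := by
    linear_combination -hk - (-Am 0 0^2 * Bm 0 0 * Bm 1 1 + Am 0 0^2 * Bm 0 1 * Bm 1 0 - Am 0 0 * Am 1 1 * Bm 0 0 * Bm 1 1 + Am 0 0 * Am 1 1 * Bm 0 1 * Bm 1 0 - Am 0 1 * Am 1 0 * Bm 0 0 * Bm 1 1 + Am 0 1 * Am 1 0 * Bm 0 1 * Bm 1 0 - Am 1 1^2 * Bm 0 0 * Bm 1 1 + Am 1 1^2 * Bm 0 1 * Bm 1 0 + Am 0 0 * Bm 0 0 + Am 0 0 * Bm 1 1 + Am 1 1 * Bm 0 0 + Am 1 1 * Bm 1 1 - 1) * hd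
  have hb : (Bm 0 0 * Bm 1 1 - Bm 0 1 * Bm 1 0) * (Am 0 0 + Am 1 1) = Bm 0 0 + Bm 1 1 := by
    rcases mul_eq_zero.mp hq with h1 | h1
    · have := pow_eq_zero_iff (n := 2) (by norm_num) |>.mp h1
      exact sub_eq_zero.mp this
    · exact absurd h1 hdA
  by_cases hB : Bm 1 0 ≠ 0 ∨ Bm 0 1 ≠ 0
  · have := coreB Am Bm hd hb hB
    omega
  push_neg at hB
  obtain ⟨hB10, hB01⟩ := hB
  by_cases hA : Am 1 0 ≠ 0 ∨ Am 0 1 ≠ 0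
  · -- swap roles of A and B
    have hd' : (Bm 0 0 * Bm 1 1 - Bm 0 1 * Bm 1 0) * (Am 0 0 * Am 1 1 - Am 0 1 * Am 1 0) = 1 := by
      linear_combination hd
    have hb' : (Am 0 0 * Am 1 1 - Am 0 1 * Am 1 0) * (Bm 0 0 + Bm 1 1) = Am 0 0 + Am 1 1 := by
      linear_combination (Am 0 0 + Am 1 1) * hd - (Am 0 0 * Am 1 1 - Am 0 1 * Am 1 0) * hb
    have := coreB Bm Am hd' hb' hA
    rw [rank_swap] at this
    omega
  push_neg at hA
  obtain ⟨hA10, hA01⟩ := hA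
  have := coreDiag Am Bm hd hdet0 hA10 hA01 hB10 hB01
  omega
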